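/- Let x,y,z ≥ 0 with x ≤ 1 and 2y+z ≤ 1, and let p₁,p₂,p₃,p₄ ≥ 0 with p₁+p₂+p₃+p₄ = 1. Then for ρ = diag(p₁,p₂,p₃,p₄), the coherent information I_coh(Φ_{x,y,z}, ρ) = S(Φ_{x,y,z}(ρ)) − S(Φ_{x,y,z}^C(ρ)) equals η(p₁ + p₂x + p₃x + p₄z) + η(p₂(1−x) + p₄y) + η(p₃(1−x) + p₄y) + η(p₄(1−2y−z)) − η(p₁ + p₂(1−x) + p₃(1−x) + p₄(1−2y−z)) − η(p₂x + p₄y) − η(p₃x + p₄y) − η(p₄z). -/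

import Mathlib

open Matrix

section EigAux
open Polynomial

lemma charpoly_conj_unitary {n : Type*} [Fintype n] [DecidableEq n]
    (U : Matrix n n ℂ) (hU : U ∈ Matrix.unitaryGroup n ℂ) (D : Matrix n n ℂ) :
    (U * D * star U).charpoly = D.charpoly := by
  have hUU : U * star U = 1 := Matrix.mem_unitaryGroup_iff.mp hU
  have hU'U : star U * U = 1 := Matrix.mem_unitaryGroup_iff'.mp hU
  have hcomm : C.mapMatrix U * Matrix.scalar n (X : ℂ[X])
      = Matrix.scalar n (X : ℂ[X]) * C.mapMatrix U :=
    ((Matrix.scalar_commute (X : ℂ[X]) (fun r => Commute.all _ _) (C.mapMatrix U))).symm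
  have h1 : charmatrix (U * D * star U)
      = C.mapMatrix U * charmatrix D * C.mapMatrix (star U) := by
    rw [charmatrix, charmatrix, mul_sub, sub_mul]
    congr 1
    · rw [hcomm, mul_assoc, ← _root_.map_mul, hUU, _root_.map_one, mul_one]
    · rw [← _root_.map_mul, ← _root_.map_mul]
  unfold Matrix.charpoly
  rw [h1, det_mul, det_mul]
  have h2 : (C.mapMatrix U).det * (C.mapMatrix (star U)).det = 1 := by
    rw [← det_mul, ← _root_.map_mul, hUU, _root_.map_one, det_one]
  calc (C.mapMatrix U).det * (charmatrix D).det * (C.mapMatrix (star U)).det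
      = (charmatrix D).det * ((C.mapMatrix U).det * (C.mapMatrix (star U)).det) := by ring
    _ = (charmatrix D).det := by rw [h2, mul_one]

lemma charpoly_diag {n : Type*} [Fintype n] [DecidableEq n]
    (d : n → ℂ) : (Matrix.diagonal d).charpoly = ∏ i, (X - C (d i)) := by
  unfold Matrix.charpoly
  have : charmatrix (Matrix.diagonal d) = Matrix.diagonal (fun i => X - C (d i)) := by
    ext i j
    by_cases h : i = j <;>
      simp [charmatrix_apply, Matrix.diagonal_apply, Matrix.one_apply, h]
  rw [this, det_diagonal]

lemma eigen_multiset_diag {n : Type*} [Fintype n] [DecidableEq n]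
    (d : n → ℝ) (h : (Matrix.diagonal (fun i => (d i : ℂ))).IsHermitian) :
    Multiset.map h.eigenvalues Finset.univ.val = Multiset.map d Finset.univ.val := by
  have hspec := h.spectral_theorem
  have hcp : (Matrix.diagonal (fun i => (d i : ℂ))).charpoly
      = (Matrix.diagonal (RCLike.ofReal ∘ h.eigenvalues : n → ℂ)).charpoly := by
    conv_lhs => rw [hspec]
    exact charpoly_conj_unitary _ (h.eigenvectorUnitary).2 _
  rw [charpoly_diag, charpoly_diag] at hcp
  have h2 : Multiset.map (fun i => (h.eigenvalues i : ℂ)) Finset.univ.val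
      = Multiset.map (fun i => (d i : ℂ)) Finset.univ.val := by
    have h3 := congrArg Polynomial.roots hcp
    rw [Finset.prod_eq_multiset_prod, Finset.prod_eq_multiset_prod,
      show (fun i => X - C ((d i : ℂ))) = (fun c => X - C c) ∘ (fun i => (d i : ℂ)) from rfl,
      show (fun i => X - C ((RCLike.ofReal ∘ h.eigenvalues) i : ℂ)) = (fun c => X - C c) ∘ (fun i => ((h.eigenvalues i : ℝ) : ℂ)) from rfl,
      ← Multiset.map_map (fun c => X - C c), ← Multiset.map_map (fun c => X - C c),
      Polynomial.roots_multiset_prod_X_sub_C, Polynomial.roots_multiset_prod_X_sub_C] at h3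
    exact h3.symm
  have h4 := congrArg (Multiset.map Complex.re) h2
  simp only [Multiset.map_map, Function.comp] at h4
  simpa using h4

end EigAux

/-- `η(t) = −t·log t / log 2` for `t > 0`, and `0` otherwise. -/
noncomputable def eta (t : ℝ) : ℝ := if 0 < t then -t * Real.log t / Real.log 2 else 0

/-- The von Neumann entropy of a (Hermitian) matrix: the sum of `η` over its eigenvalues. -/
noncomputable def vnEntropy {n : Type*} [Fintype n] [DecidableEq n] (ρ : Matrix n n ℂ) : ℝ :=
  if h : ρ.IsHermitian then ∑ i, eta (h.eigenvalues i) else 0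

lemma vnEntropy_diagonal {n : Type*} [Fintype n] [DecidableEq n] (d : n → ℝ) :
    vnEntropy (Matrix.diagonal (fun i => (d i : ℂ))) = ∑ i, eta (d i) := by
  have hH : (Matrix.diagonal (fun i => (d i : ℂ))).IsHermitian := by
    rw [Matrix.isHermitian_diagonal_iff]
    intro i
    exact Complex.conj_ofReal (d i)
  rw [vnEntropy, dif_pos hH]
  have := congrArg (Multiset.map eta) (eigen_multiset_diag d hH)
  rw [Multiset.map_map, Multiset.map_map] at this
  have h1 : ∑ i, eta (hH.eigenvalues i)
      = (Multiset.map (eta ∘ hH.eigenvalues) Finset.univ.val).sum := rfl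
  have h2 : ∑ i, eta (d i) = (Multiset.map (eta ∘ d) Finset.univ.val).sum := rfl
  rw [h1, h2, this]

/-- Kraus operators `A_0, …, A_3` of the two-qubit amplitude damping channel `Φ_{x,y,z}`,
in the standard basis `e_0, …, e_3` of `ℂ⁴`. -/
noncomputable def ADkraus (x y z : ℝ) : Fin 4 → Matrix (Fin 4) (Fin 4) ℂ
  | 0 => Matrix.diagonal ![1, (Real.sqrt (1 - x) : ℂ), (Real.sqrt (1 - x) : ℂ),
          (Real.sqrt (1 - 2*y - z) : ℂ)]
  | 1 => Matrix.single 0 1 (Real.sqrt x : ℂ) + Matrix.single 2 3 (Real.sqrt y : ℂ)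
  | 2 => Matrix.single 0 2 (Real.sqrt x : ℂ) + Matrix.single 1 3 (Real.sqrt y : ℂ)
  | 3 => Matrix.single 0 3 (Real.sqrt z : ℂ)

lemma trace_mul_diag_conj (M N : Matrix (Fin 4) (Fin 4) ℂ) (d : Fin 4 → ℂ) :
    (M * Matrix.diagonal d * Nᴴ).trace = ∑ p, ∑ l, M p l * d l * star (N p l) := by
  simp only [Matrix.trace, Matrix.diag, Matrix.mul_apply, Matrix.diagonal_apply,
    Matrix.conjTranspose_apply]
  congr 1; ext p; congr 1; ext l
  rw [Finset.sum_mul, Finset.sum_eq_single l]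
  · simp
  · intro b _ hb; simp [hb]
  · simp

/-- For `ρ = diag(p₁,p₂,p₃,p₄)`, the coherent information
`I_coh(Φ_{x,y,z}, ρ) = S(Φ_{x,y,z}(ρ)) − S(Φ_{x,y,z}^C(ρ))` is the stated combination of
values of `η`. -/
theorem coherent_information_on_diagonal_states (x y z p₁ p₂ p₃ p₄ : ℝ)
    (hx0 : 0 ≤ x) (hy0 : 0 ≤ y) (hz0 : 0 ≤ z) (hx1 : x ≤ 1) (hyz : 2*y + z ≤ 1)
    (hp1 : 0 ≤ p₁) (hp2 : 0 ≤ p₂) (hp3 : 0 ≤ p₃) (hp4 : 0 ≤ p₄)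
    (hpsum : p₁ + p₂ + p₃ + p₄ = 1) :
    vnEntropy (∑ i : Fin 4,
        ADkraus x y z i * Matrix.diagonal ![(p₁ : ℂ), (p₂ : ℂ), (p₃ : ℂ), (p₄ : ℂ)] *
          (ADkraus x y z i)ᴴ)
      - vnEntropy (Matrix.of fun j k : Fin 4 =>
          (ADkraus x y z j * Matrix.diagonal ![(p₁ : ℂ), (p₂ : ℂ), (p₃ : ℂ), (p₄ : ℂ)] *
            (ADkraus x y z k)ᴴ).trace)
    = eta (p₁ + p₂ * x + p₃ * x + p₄ * z) + eta (p₂ * (1 - x) + p₄ * y)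
      + eta (p₃ * (1 - x) + p₄ * y) + eta (p₄ * (1 - 2*y - z))
      - eta (p₁ + p₂ * (1 - x) + p₃ * (1 - x) + p₄ * (1 - 2*y - z))
      - eta (p₂ * x + p₄ * y) - eta (p₃ * x + p₄ * y) - eta (p₄ * z) := by
  have h1 : (Real.sqrt (1-x) : ℂ) * (Real.sqrt (1-x) : ℂ) = ((1-x : ℝ) : ℂ) := by
    rw [← Complex.ofReal_mul, Real.mul_self_sqrt (by linarith)]
  have h2 : (Real.sqrt x : ℂ) * (Real.sqrt x : ℂ) = ((x:ℝ) : ℂ) := by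
    rw [← Complex.ofReal_mul, Real.mul_self_sqrt hx0]
  have h3 : (Real.sqrt y : ℂ) * (Real.sqrt y : ℂ) = ((y:ℝ) : ℂ) := by
    rw [← Complex.ofReal_mul, Real.mul_self_sqrt hy0]
  have h4 : (Real.sqrt z : ℂ) * (Real.sqrt z : ℂ) = ((z:ℝ) : ℂ) := by
    rw [← Complex.ofReal_mul, Real.mul_self_sqrt hz0]
  have h5 : (Real.sqrt (1-2*y-z) : ℂ) * (Real.sqrt (1-2*y-z) : ℂ) = ((1-2*y-z : ℝ) : ℂ) := by
    rw [← Complex.ofReal_mul, Real.mul_self_sqrt (by linarith)]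
  have hout : (∑ i : Fin 4,
        ADkraus x y z i * Matrix.diagonal ![(p₁ : ℂ), (p₂ : ℂ), (p₃ : ℂ), (p₄ : ℂ)] *
          (ADkraus x y z i)ᴴ)
      = Matrix.diagonal (fun i => ((![p₁ + p₂*x + p₃*x + p₄*z, p₂*(1-x) + p₄*y,
        p₃*(1-x) + p₄*y, p₄*(1-2*y-z)] : Fin 4 → ℝ) i : ℂ)) := by
    ext i j
    rw [Fin.sum_univ_four]
    fin_cases i <;> fin_cases j <;>
      simp [ADkraus, Matrix.mul_apply, Fin.sum_univ_four, Matrix.conjTranspose_apply,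
        Matrix.single, Matrix.diagonal_apply, Complex.ofReal_mul] <;>
      ring_nf <;>
      simp only [pow_two, show (1 + (-(y*2)-z) : ℝ) = 1-2*y-z from by ring, show (1 - y*2 - z : ℝ) = 1-2*y-z from by ring,
        h1, h2, h3, h4, h5] <;> push_cast <;> ring
  have hcomp : (Matrix.of fun j k : Fin 4 =>
          (ADkraus x y z j * Matrix.diagonal ![(p₁ : ℂ), (p₂ : ℂ), (p₃ : ℂ), (p₄ : ℂ)] *
            (ADkraus x y z k)ᴴ).trace)
      = Matrix.diagonal (fun i => ((![p₁ + p₂*(1-x) + p₃*(1-x) + p₄*(1-2*y-z),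
        p₂*x + p₄*y, p₃*x + p₄*y, p₄*z] : Fin 4 → ℝ) i : ℂ)) := by
    ext i j
    rw [Matrix.of_apply, trace_mul_diag_conj]
    fin_cases i <;> fin_cases j <;>
      simp [ADkraus, Fin.sum_univ_four, Matrix.single, Matrix.diagonal_apply] <;>
      ring_nf <;>
      simp only [pow_two, show (1 + (-(y*2)-z) : ℝ) = 1-2*y-z from by ring, show (1 - y*2 - z : ℝ) = 1-2*y-z from by ring,
        h1, h2, h3, h4, h5] <;> push_cast <;> ring
  rw [hout, hcomp, vnEntropy_diagonal, vnEntropy_diagonal, Fin.sum_univ_four, Fin.sum_univ_four]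
  simp only [Matrix.cons_val_zero, Matrix.cons_val_one, Matrix.head_cons,
    Matrix.cons_val_two, Matrix.tail_cons, Matrix.cons_val_three]
  ring
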